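/- Consider the single-plane lens with two unit point masses at positions 1 and −1 (i.e., Einstein radii b_1 = b_2 = 1, positions ξ_1 = 1, ξ_2 = −1) and source w = 0. Then the lens equation z − (z − 1)/|z − 1|² − (z + 1)/|z + 1|² = 0 has exactly 5 solutions in ℂ \ {1, −1}, and every solution is nondegenerate. -/

import Mathlib

open Complex

lemma div_abs_sq (w : ℂ) : w / (‖w‖ : ℂ) ^ 2 = ((starRingEnd ℂ) w)⁻¹ := by
  rcases eq_or_ne w 0 with rfl | hw
  · simp
  · have hcw : (starRingEnd ℂ) w ≠ 0 := by simpa using hw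
    rw [← Complex.ofReal_pow, Complex.sq_norm, Complex.normSq_eq_conj_mul_self]
    field_simp

lemma f_eq (z : ℂ) :
    z - (z - 1) / (‖z - 1‖ : ℂ) ^ 2 - (z + 1) / (‖z + 1‖ : ℂ) ^ 2
      = z - ((starRingEnd ℂ) z - 1)⁻¹ - ((starRingEnd ℂ) z + 1)⁻¹ := by
  have h1 := div_abs_sq (z - 1)
  have h2 := div_abs_sq (z + 1)
  simp only [map_sub, map_add, map_one] at h1 h2
  rw [h1, h2]

lemma sol_iff (z : ℂ) (h1 : z ≠ 1) (h2 : z ≠ -1) :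
    z - ((starRingEnd ℂ) z - 1)⁻¹ - ((starRingEnd ℂ) z + 1)⁻¹ = 0
      ↔ z * ((starRingEnd ℂ) z) ^ 2 - z - 2 * (starRingEnd ℂ) z = 0 := by
  have hc1 : (starRingEnd ℂ) z - 1 ≠ 0 := by
    intro h
    apply h1
    have h' : (starRingEnd ℂ) z = 1 := by linear_combination h
    have := congrArg (starRingEnd ℂ) h'
    simpa using this
  have hc2 : (starRingEnd ℂ) z + 1 ≠ 0 := by
    intro h
    apply h2
    have h' : (starRingEnd ℂ) z = -1 := by linear_combination h
    have := congrArg (starRingEnd ℂ) h'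
    simpa using this
  rw [sub_sub, sub_eq_zero]
  constructor
  · intro h
    have h' : z * (((starRingEnd ℂ) z - 1) * ((starRingEnd ℂ) z + 1))
        = (((starRingEnd ℂ) z - 1)⁻¹ + ((starRingEnd ℂ) z + 1)⁻¹)
          * (((starRingEnd ℂ) z - 1) * ((starRingEnd ℂ) z + 1)) := by
      rw [← h]
    field_simp at h'
    linear_combination h'
  · intro h
    field_simp
    linear_combination h

lemma sol_classify (z : ℂ)
    (h : z * ((starRingEnd ℂ) z) ^ 2 - z - 2 * (starRingEnd ℂ) z = 0) :
    z = 0 ∨ z = (Real.sqrt 3 : ℝ) ∨ z = -(Real.sqrt 3 : ℝ) ∨ z = Complex.I ∨ z = -Complex.I := by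
  set x := z.re with hx
  set y := z.im with hy
  have hre : x * (x ^ 2 + y ^ 2 - 3) = 0 := by
    have := congrArg Complex.re h
    simp [Complex.mul_re, Complex.mul_im, pow_two] at this
    nlinarith [this]
  have him : y * (x ^ 2 + y ^ 2 - 1) = 0 := by
    have := congrArg Complex.im h
    simp [Complex.mul_re, Complex.mul_im, pow_two] at this
    nlinarith [this]
  have hs3 : Real.sqrt 3 ^ 2 = 3 := Real.sq_sqrt (by norm_num)
  rcases mul_eq_zero.mp hre with hx0 | hxy
  · rcases mul_eq_zero.mp him with hy0 | hyy
    · left; apply Complex.ext <;> simp [← hx, ← hy, hx0, hy0]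
    · have : (y - 1) * (y + 1) = 0 := by nlinarith
      rcases mul_eq_zero.mp this with h1 | h1
      · right; right; right; left
        apply Complex.ext <;> simp [← hx, ← hy, hx0] <;> linarith
      · right; right; right; right
        apply Complex.ext <;> simp [← hx, ← hy, hx0] <;> linarith
  · rcases mul_eq_zero.mp him with hy0 | hyy
    · have : (x - Real.sqrt 3) * (x + Real.sqrt 3) = 0 := by nlinarith
      rcases mul_eq_zero.mp this with h1 | h1
      · right; left
        apply Complex.ext <;> simp [← hx, ← hy, hy0] <;> linarith
      · right; right; left
        apply Complex.ext <;> simp [← hx, ← hy, hy0] <;> linarith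
    · exfalso; nlinarith

noncomputable def conjCLM : ℂ →L[ℝ] ℂ := Complex.conjCLE.toContinuousLinearMap

lemma conjCLM_apply (z : ℂ) : conjCLM z = (starRingEnd ℂ) z := rfl

lemma hasDeriv_lens (p : ℂ) (h1 : (starRingEnd ℂ) p - 1 ≠ 0) (h2 : (starRingEnd ℂ) p + 1 ≠ 0) :
    HasFDerivAt (fun z : ℂ => z - ((starRingEnd ℂ) z - 1)⁻¹ - ((starRingEnd ℂ) z + 1)⁻¹)
      (ContinuousLinearMap.id ℝ ℂ
        + (((((starRingEnd ℂ) p - 1) ^ 2)⁻¹ + (((starRingEnd ℂ) p + 1) ^ 2)⁻¹ : ℂ)) • conjCLM) p := by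
  have hc : HasFDerivAt (fun z : ℂ => (starRingEnd ℂ) z) conjCLM p :=
    Complex.conjCLE.hasFDerivAt
  have hA : HasFDerivAt (fun z : ℂ => ((starRingEnd ℂ) z - 1)⁻¹)
      ((-(((starRingEnd ℂ) p - 1) ^ 2)⁻¹ : ℂ) • conjCLM) p := by
    have houter : HasDerivAt (fun w : ℂ => (w - 1)⁻¹)
        (-(((starRingEnd ℂ) p - 1) ^ 2)⁻¹) ((starRingEnd ℂ) p) := by
      have := ((hasDerivAt_id ((starRingEnd ℂ) p)).sub_const 1).fun_inv h1
      simpa [neg_div, one_div] using this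
    have hcomp := (houter.hasFDerivAt.restrictScalars ℝ).comp p hc
    refine hcomp.congr_fderiv ?_
    ext h
    simp [Function.comp, conjCLM_apply, mul_comm]
  have hB : HasFDerivAt (fun z : ℂ => ((starRingEnd ℂ) z + 1)⁻¹)
      ((-(((starRingEnd ℂ) p + 1) ^ 2)⁻¹ : ℂ) • conjCLM) p := by
    have houter : HasDerivAt (fun w : ℂ => (w + 1)⁻¹)
        (-(((starRingEnd ℂ) p + 1) ^ 2)⁻¹) ((starRingEnd ℂ) p) := by
      have := ((hasDerivAt_id ((starRingEnd ℂ) p)).add_const 1).fun_inv h2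
      simpa [neg_div, one_div] using this
    have hcomp := (houter.hasFDerivAt.restrictScalars ℝ).comp p hc
    refine hcomp.congr_fderiv ?_
    ext h
    simp [Function.comp, conjCLM_apply, mul_comm]
  have := ((hasFDerivAt_id p).sub hA).sub hB
  refine this.congr_fderiv ?_
  ext h
  simp [conjCLM_apply]
  ring

noncomputable def T2 : ℂ →L[ℝ] ℂ := ContinuousLinearMap.id ℝ ℂ + (2 : ℂ) • conjCLM

noncomputable def E2 : ℂ ≃L[ℝ] ℂ :=
  (LinearEquiv.ofLinear T2.toLinearMap
    ((-(1/3 : ℂ)) • (ContinuousLinearMap.id ℝ ℂ) + ((2/3 : ℂ)) • conjCLM).toLinearMap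
    (by
      ext h
      simp [T2, conjCLM_apply, map_add, map_mul, map_neg, map_div₀, map_ofNat, map_one,
        Complex.conj_conj, smul_eq_mul]
      ring)
    (by
      ext h
      simp [T2, conjCLM_apply, map_add, map_mul, map_neg, map_div₀, map_ofNat, map_one,
        Complex.conj_conj, smul_eq_mul]
      ring)).toContinuousLinearEquiv

lemma E2_coe : (E2 : ℂ →L[ℝ] ℂ) = T2 := by
  ext h
  simp [E2]

lemma Id_coe : ((ContinuousLinearEquiv.refl ℝ ℂ : ℂ ≃L[ℝ] ℂ) : ℂ →L[ℝ] ℂ)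
    = ContinuousLinearMap.id ℝ ℂ := rfl

lemma coef_two (c : ℂ) (hc : c ^ 2 = 3) :
    ((c - 1) ^ 2)⁻¹ + ((c + 1) ^ 2)⁻¹ = 2 := by
  have h1 : (c - 1) ^ 2 = 4 - 2 * c := by linear_combination hc
  have h2 : (c + 1) ^ 2 = 4 + 2 * c := by linear_combination hc
  have hprod : (4 - 2 * c) * (4 + 2 * c) = 4 := by linear_combination (-4 : ℂ) * hc
  have n1 : (4 - 2 * c : ℂ) ≠ 0 := by
    intro h; rw [h, zero_mul] at hprod; norm_num at hprod
  have n2 : (4 + 2 * c : ℂ) ≠ 0 := by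
    intro h; rw [h, mul_zero] at hprod; norm_num at hprod
  rw [h1, h2, inv_eq_one_div, inv_eq_one_div, div_add_div _ _ n1 n2, hprod,
    show (1 * (4 + 2 * c) + (4 - 2 * c) * 1 : ℂ) = 8 by ring]
  norm_num

theorem two_mass_lens_five_images :
    let f : ℂ → ℂ := fun z =>
      z - (z - 1) / (‖z - 1‖ : ℂ) ^ 2
        - (z + 1) / (‖z + 1‖ : ℂ) ^ 2
    let S : Set ℂ := {z : ℂ | z ≠ 1 ∧ z ≠ -1 ∧ f z = 0}
    S.Finite ∧ S.ncard = 5 ∧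
      ∀ z ∈ S, ∃ L : ℂ ≃L[ℝ] ℂ, HasFDerivAt f (L : ℂ →L[ℝ] ℂ) z := by
  intro f S
  have hfeq : f = fun z : ℂ =>
      z - ((starRingEnd ℂ) z - 1)⁻¹ - ((starRingEnd ℂ) z + 1)⁻¹ := funext f_eq
  set s : ℝ := Real.sqrt 3 with hsdef
  have hs : s ^ 2 = 3 := Real.sq_sqrt (by norm_num)
  have hs1 : 1 < s := by nlinarith [Real.sqrt_nonneg 3]
  have hsc : (s : ℂ) ^ 2 = 3 := by
    rw [← Complex.ofReal_pow, hs]; norm_num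
  have hmem : ∀ z ∈ ({0, (s : ℂ), -(s : ℂ), I, -I} : Set ℂ), z ∈ S := by
    intro z hz
    simp only [Set.mem_insert_iff, Set.mem_singleton_iff] at hz
    have h3 : ∀ w : ℂ, w ≠ 1 → w ≠ -1 →
        (w * ((starRingEnd ℂ) w) ^ 2 - w - 2 * (starRingEnd ℂ) w = 0) → w ∈ S := by
      intro w h1 h2 halg
      refine ⟨h1, h2, ?_⟩
      rw [hfeq]
      exact (sol_iff w h1 h2).mpr halg
    rcases hz with rfl | rfl | rfl | rfl | rfl
    · exact h3 0 (by norm_num) (by norm_num) (by simp)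
    · refine h3 _ ?_ ?_ ?_
      · intro h; rw [Complex.ext_iff] at h; norm_num at h; linarith
      · intro h; rw [Complex.ext_iff] at h; norm_num at h; linarith
      · rw [Complex.conj_ofReal]; linear_combination (s : ℂ) * hsc
    · refine h3 _ ?_ ?_ ?_
      · intro h; rw [Complex.ext_iff] at h; norm_num at h; linarith
      · intro h; rw [Complex.ext_iff] at h; norm_num at h; linarith
      · rw [map_neg, Complex.conj_ofReal]; linear_combination (-(s : ℂ)) * hsc
    · refine h3 _ ?_ ?_ ?_
      · intro h; rw [Complex.ext_iff] at h; norm_num at h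
      · intro h; rw [Complex.ext_iff] at h; norm_num at h
      · rw [Complex.conj_I]; linear_combination I * Complex.I_sq
    · refine h3 _ ?_ ?_ ?_
      · intro h; rw [Complex.ext_iff] at h; norm_num at h
      · intro h; rw [Complex.ext_iff] at h; norm_num at h
      · rw [map_neg, Complex.conj_I]; linear_combination (-I) * Complex.I_sq
  have hS : S = ({0, (s : ℂ), -(s : ℂ), I, -I} : Set ℂ) := by
    ext z
    constructor
    · rintro ⟨h1, h2, hf⟩
      rw [hfeq] at hf
      have := sol_classify z ((sol_iff z h1 h2).mp hf)
      simpa [Set.mem_insert_iff] using this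
    · exact hmem z
  refine ⟨?_, ?_, ?_⟩
  · rw [hS]
    exact (Set.finite_singleton _).insert _ |>.insert _ |>.insert _ |>.insert _
  · rw [hS]
    rw [Set.ncard_insert_of_notMem (by
          simp only [Set.mem_insert_iff, Set.mem_singleton_iff]
          push_neg
          refine ⟨?_, ?_, ?_, ?_⟩ <;> intro h <;> rw [Complex.ext_iff] at h <;>
            norm_num at h <;> linarith),
        Set.ncard_insert_of_notMem (by
          simp only [Set.mem_insert_iff, Set.mem_singleton_iff]
          push_neg
          refine ⟨?_, ?_, ?_⟩ <;> intro h <;> rw [Complex.ext_iff] at h <;>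
            norm_num at h <;> linarith),
        Set.ncard_insert_of_notMem (by
          simp only [Set.mem_insert_iff, Set.mem_singleton_iff]
          push_neg
          refine ⟨?_, ?_⟩ <;> intro h <;> rw [Complex.ext_iff] at h <;>
            norm_num at h <;> linarith),
        Set.ncard_insert_of_notMem (by
          intro h
          rw [Set.mem_singleton_iff, Complex.ext_iff] at h
          norm_num at h),
        Set.ncard_singleton]
  · intro z hz
    rw [hS] at hz
    simp only [Set.mem_insert_iff, Set.mem_singleton_iff] at hz
    have hids : ∀ p : ℂ, (starRingEnd ℂ) p - 1 ≠ 0 → (starRingEnd ℂ) p + 1 ≠ 0 →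
        ((((starRingEnd ℂ) p - 1) ^ 2)⁻¹ + (((starRingEnd ℂ) p + 1) ^ 2)⁻¹ : ℂ) = 2 →
        HasFDerivAt f (T2) p := by
      intro p h1 h2 hcoef
      rw [hfeq]
      have hd := hasDeriv_lens p h1 h2
      rw [hcoef] at hd
      exact hd
    rcases hz with rfl | rfl | rfl | rfl | rfl
    · refine ⟨E2, ?_⟩
      rw [E2_coe]
      refine hids 0 (by norm_num) (by norm_num) (by norm_num)
    · refine ⟨E2, ?_⟩
      rw [E2_coe]
      have hne1 : ((s:ℂ)) - 1 ≠ 0 := by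
        rw [sub_ne_zero]
        intro h; rw [Complex.ext_iff] at h; norm_num at h; linarith
      have hne2 : ((s:ℂ)) + 1 ≠ 0 := by
        intro h
        have h' : (s:ℂ) = -1 := by linear_combination h
        rw [Complex.ext_iff] at h'; norm_num at h'; linarith
      refine hids _ (by rw [Complex.conj_ofReal]; exact hne1)
        (by rw [Complex.conj_ofReal]; exact hne2) ?_
      rw [Complex.conj_ofReal]
      exact coef_two _ hsc
    · refine ⟨E2, ?_⟩
      rw [E2_coe]
      have hne1 : (-(s:ℂ)) - 1 ≠ 0 := by
        intro h
        have h' : (s:ℂ) = -1 := by linear_combination -h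
        rw [Complex.ext_iff] at h'; norm_num at h'; linarith
      have hne2 : (-(s:ℂ)) + 1 ≠ 0 := by
        intro h
        have h' : (s:ℂ) = 1 := by linear_combination -h
        rw [Complex.ext_iff] at h'; norm_num at h'; linarith
      refine hids _ (by rw [map_neg, Complex.conj_ofReal]; exact hne1)
        (by rw [map_neg, Complex.conj_ofReal]; exact hne2) ?_
      rw [map_neg, Complex.conj_ofReal]
      refine coef_two _ ?_
      rw [neg_pow]
      simpa using hsc
    · refine ⟨ContinuousLinearEquiv.refl ℝ ℂ, ?_⟩
      rw [Id_coe, hfeq]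
      have e1 : ((starRingEnd ℂ) I - 1) ^ 2 = 2 * I := by
        rw [Complex.conj_I]; linear_combination Complex.I_sq
      have e2 : ((starRingEnd ℂ) I + 1) ^ 2 = -(2 * I) := by
        rw [Complex.conj_I]; linear_combination Complex.I_sq
      have hd := hasDeriv_lens I
        (by rw [Complex.conj_I]; intro h; rw [Complex.ext_iff] at h; norm_num at h)
        (by rw [Complex.conj_I]; intro h; rw [Complex.ext_iff] at h; norm_num at h)
      rw [e1, e2] at hd
      have hz0 : (((2 * I : ℂ))⁻¹ + ((-(2 * I) : ℂ))⁻¹ : ℂ) = 0 := by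
        rw [inv_neg]; ring
      rw [hz0] at hd
      have hEq : (ContinuousLinearMap.id ℝ ℂ + (0 : ℂ) • conjCLM) = ContinuousLinearMap.id ℝ ℂ := by
        ext h
        simp
      rw [hEq] at hd
      exact hd
    · refine ⟨ContinuousLinearEquiv.refl ℝ ℂ, ?_⟩
      rw [Id_coe, hfeq]
      have e1 : ((starRingEnd ℂ) (-I) - 1) ^ 2 = -(2 * I) := by
        rw [map_neg, Complex.conj_I]; linear_combination Complex.I_sq
      have e2 : ((starRingEnd ℂ) (-I) + 1) ^ 2 = 2 * I := by
        rw [map_neg, Complex.conj_I]; linear_combination Complex.I_sq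
      have hd := hasDeriv_lens (-I)
        (by rw [map_neg, Complex.conj_I]; intro h; rw [Complex.ext_iff] at h; norm_num at h)
        (by rw [map_neg, Complex.conj_I]; intro h; rw [Complex.ext_iff] at h; norm_num at h)
      rw [e1, e2] at hd
      have hz0 : (((-(2 * I) : ℂ))⁻¹ + ((2 * I : ℂ))⁻¹ : ℂ) = 0 := by
        rw [inv_neg]; ring
      rw [hz0] at hd
      have hEq : (ContinuousLinearMap.id ℝ ℂ + (0 : ℂ) • conjCLM) = ContinuousLinearMap.id ℝ ℂ := by
        ext h
        simp
      rw [hEq] at hd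
      exact hd
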